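/- Assume c_0>0, c_j≥0 (j≥1), r_j>0. If k is even, U_k has exactly k/2 negative roots and k/2 positive roots, and U_{k+1} has exactly k/2 negative roots and k/2+1 positive roots; in particular 0 is never a root. -/

import Mathlib

open Polynomial

noncomputable def U (c r : ℕ → ℝ) : ℕ → Polynomial ℝ
  | 0 => 1
  | 1 => X - C (c 0)
  | (k+2) => (X + C ((-1)^(k+2) * c (k+1))) * U c r (k+1) - C (r (k+1)) * U c r k

lemma U_monic (c r : ℕ → ℝ) : ∀ k, (U c r k).Monic ∧ (U c r k).natDegree = k := by
  intro k
  induction k using Nat.strong_induction_on with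
  | _ k ih =>
    match k with
    | 0 => exact ⟨monic_one, natDegree_one⟩
    | 1 => exact ⟨monic_X_sub_C _, natDegree_X_sub_C _⟩
    | (k+2) =>
      obtain ⟨h1, h1d⟩ := ih (k+1) (by omega)
      obtain ⟨h0, h0d⟩ := ih k (by omega)
      have hm : ((X + C ((-1)^(k+2) * c (k+1))) * U c r (k+1)).Monic :=
        (monic_X_add_C _).mul h1
      have hdeg : ((X + C ((-1)^(k+2) * c (k+1))) * U c r (k+1)).natDegree = k + 2 := by
        rw [(monic_X_add_C _).natDegree_mul h1, natDegree_X_add_C, h1d]; ring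
      have hlt : (C (r (k+1)) * U c r k).degree <
          ((X + C ((-1)^(k+2) * c (k+1))) * U c r (k+1)).degree := by
        rw [degree_eq_natDegree hm.ne_zero, hdeg]
        calc (C (r (k+1)) * U c r k).degree ≤ 0 + (k:ℕ) := by
              refine (degree_mul_le _ _).trans ?_
              exact add_le_add degree_C_le (by rw [degree_eq_natDegree h0.ne_zero, h0d])
          _ < ((k+2 : ℕ) : WithBot ℕ) := by
              rw [zero_add]; exact_mod_cast by omega
      constructor
      · show ((X + C ((-1)^(k+2) * c (k+1))) * U c r (k+1) - C (r (k+1)) * U c r k).Monic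
        have := hm.add_of_left (q := -(C (r (k+1)) * U c r k)) (by rwa [degree_neg])
        simpa [sub_eq_add_neg] using this
      · show ((X + C ((-1)^(k+2) * c (k+1))) * U c r (k+1) - C (r (k+1)) * U c r k).natDegree = k+2
        rw [natDegree_sub_eq_left_of_natDegree_lt, hdeg]
        rw [hdeg]
        have : (C (r (k+1)) * U c r k).natDegree ≤ 0 + k := natDegree_mul_le.trans (by
          simp [h0d])
        omega

lemma U_sign0 (c r : ℕ → ℝ) (hc0 : 0 < c 0) (hc : ∀ j, 1 ≤ j → 0 ≤ c j)
    (hr : ∀ k, 1 ≤ k → 0 < r k) :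
    ∀ k, 0 < (-1:ℝ)^((k+1)/2) * (U c r k).eval 0 := by
  intro k
  induction k using Nat.strong_induction_on with
  | _ k ih =>
    match k with
    | 0 => simp [U]
    | 1 => simpa [U] using hc0
    | (k+2) =>
      have e1 := ih (k+1) (by omega)
      have e0 := ih k (by omega)
      have hck : 0 ≤ c (k+1) := hc _ (by omega)
      have hrk : 0 < r (k+1) := hr _ (by omega)
      have hev : (U c r (k+2)).eval 0
          = ((-1)^(k+2) * c (k+1)) * (U c r (k+1)).eval 0 - r (k+1) * (U c r k).eval 0 := by
        simp [U]
      rcases Nat.even_or_odd k with ⟨m, rfl⟩ | ⟨m, rfl⟩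
      · have h1 : (m+m+1+1)/2 = m+1 := by omega
        have h2 : (m+m+1)/2 = m := by omega
        have h3 : (m+m+2+1)/2 = m+1 := by omega
        have hpow : (-1:ℝ)^(m+m+2) = 1 := by
          rw [show m+m+2 = 2*(m+1) by ring, pow_mul]; norm_num
        rw [h1, pow_succ] at e1; rw [h2] at e0
        rw [h3, hev, hpow, pow_succ]
        nlinarith [mul_nonneg hck e1.le, mul_pos hrk e0]
      · have h1 : (2*m+1+1+1)/2 = m+1 := by omega
        have h2 : (2*m+1+1)/2 = m+1 := by omega
        have h3 : (2*m+1+2+1)/2 = m+2 := by omega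
        have hpow : (-1:ℝ)^(2*m+1+2) = -1 := by
          rw [show 2*m+1+2 = 2*(m+1)+1 by ring, pow_succ, pow_mul]; norm_num
        rw [h1, pow_succ] at e1; rw [h2, pow_succ] at e0
        rw [h3, hev, hpow, show m+2 = (m+1)+1 by ring, pow_succ, pow_succ]
        nlinarith [mul_nonneg hck e1.le, mul_pos hrk e0]

lemma prod_sign {ι : Type*} [DecidableEq ι] (S : Finset ι) (f : ι → ℝ) (hf : ∀ j ∈ S, f j ≠ 0) :
    0 < (-1:ℝ)^((S.filter (fun j => f j < 0)).card) * ∏ j ∈ S, f j := by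
  induction S using Finset.induction_on with
  | empty => simp
  | @insert a s ha ih =>
    have hfa : f a ≠ 0 := hf a (Finset.mem_insert_self a s)
    have ihs := ih (fun j hj => hf j (Finset.mem_insert_of_mem hj))
    rw [Finset.prod_insert ha, Finset.filter_insert]
    by_cases h : f a < 0
    · rw [if_pos h, Finset.card_insert_of_notMem (fun hm => ha (Finset.mem_filter.mp hm).1),
        pow_succ]
      nlinarith
    · have : 0 < f a := lt_of_le_of_ne (not_lt.mp h) (Ne.symm hfa)
      rw [if_neg h]
      nlinarith

lemma card_filter_val {n : ℕ} (p : ℕ → Prop) [DecidablePred p] :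
    (Finset.univ.filter (fun i : Fin n => p i.val)).card = ((Finset.range n).filter p).card := by
  apply Finset.card_bij (fun i _ => i.val)
  · intro i hi; simp_all [i.isLt]
  · intro i hi j hj hij; exact Fin.ext hij
  · intro b hb
    simp only [Finset.mem_filter, Finset.mem_range] at hb
    exact ⟨⟨b, hb.1⟩, by simp [hb.2], rfl⟩

lemma card_filter_le (n s : ℕ) :
    (Finset.univ.filter (fun i : Fin n => s ≤ (i:ℕ))).card = n - s := by
  rw [card_filter_val (fun m => s ≤ m)]
  rw [show (Finset.range n).filter (fun m => s ≤ m) = Finset.Ico s n by ext i; simp; omega]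
  exact Nat.card_Ico s n

lemma card_filter_lt (n s : ℕ) (h : s ≤ n) :
    (Finset.univ.filter (fun i : Fin n => (i:ℕ) < s)).card = s := by
  rw [card_filter_val (fun m => m < s)]
  rw [show (Finset.range n).filter (fun m => m < s) = Finset.range s by ext i; simp; omega]
  exact Finset.card_range s

-- tails of monic polynomials
lemma monic_exists_pos_atTop (P : Polynomial ℝ) (hP : P.Monic) (hd : 0 < P.natDegree) (x0 : ℝ) :
    ∃ z, x0 < z ∧ 0 < P.eval z := by
  have ht : Filter.Tendsto (fun x => P.eval x) Filter.atTop Filter.atTop :=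
    P.tendsto_atTop_of_leadingCoeff_nonneg (natDegree_pos_iff_degree_pos.mp hd)
      (by rw [hP.leadingCoeff]; norm_num)
  have := (ht.eventually_gt_atTop 0).and (Filter.eventually_gt_atTop x0)
  obtain ⟨z, hz1, hz2⟩ := this.exists
  exact ⟨z, hz2, hz1⟩

lemma monic_exists_sign_atBot (P : Polynomial ℝ) (hP : P.Monic) (hd : 0 < P.natDegree) (x0 : ℝ) :
    ∃ z, z < x0 ∧ 0 < (-1:ℝ)^(P.natDegree) * P.eval z := by
  set Q : Polynomial ℝ := P.comp (-X) with hQ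
  have hQd : Q.natDegree = P.natDegree := by
    rw [hQ, natDegree_comp]; simp
  have hQl : Q.leadingCoeff = (-1)^(P.natDegree) := by
    rw [hQ, leadingCoeff_comp (by simp)]; simp [hP.leadingCoeff]
  have hQdeg : 0 < Q.degree := by
    rw [← natDegree_pos_iff_degree_pos, hQd]; exact hd
  have ht : Filter.Tendsto (fun x => (-1:ℝ)^(P.natDegree) * Q.eval x) Filter.atTop Filter.atTop := by
    rcases Nat.even_or_odd P.natDegree with he | ho
    · have h1 : (-1:ℝ)^(P.natDegree) = 1 := he.neg_one_pow
      simp only [h1, one_mul]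
      exact Q.tendsto_atTop_of_leadingCoeff_nonneg hQdeg (by rw [hQl, h1]; norm_num)
    · have h1 : (-1:ℝ)^(P.natDegree) = -1 := ho.neg_one_pow
      simp only [h1, neg_one_mul]
      exact Filter.tendsto_neg_atBot_atTop.comp (Q.tendsto_atBot_of_leadingCoeff_nonpos hQdeg (by rw [hQl, h1]; norm_num))
  obtain ⟨z, hz1, hz2⟩ := ((ht.eventually_gt_atTop 0).and (Filter.eventually_gt_atTop (-x0))).exists
  refine ⟨-z, by linarith, ?_⟩
  have : Q.eval z = P.eval (-z) := by rw [hQ, eval_comp]; simp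
  rwa [this] at hz1

-- factorization from distinct roots
lemma monic_eq_prod_of_roots {n : ℕ} (P : Polynomial ℝ) (hP : P.Monic) (hd : P.natDegree = n)
    (b : Fin n → ℝ) (hb : Function.Injective b) (hroot : ∀ j, P.eval (b j) = 0) :
    P = ∏ j : Fin n, (X - C (b j)) := by
  have hprod : (∏ j : Fin n, (X - C (b j))).Monic :=
    monic_prod_of_monic _ _ (fun j _ => monic_X_sub_C _)
  have hproddeg : (∏ j : Fin n, (X - C (b j))).natDegree = n := by
    rw [natDegree_prod _ _ (fun j _ => X_sub_C_ne_zero _)]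
    simp
  by_contra hne
  have hsub : P - ∏ j : Fin n, (X - C (b j)) ≠ 0 := sub_ne_zero.mpr hne
  have hdeglt : (P - ∏ j : Fin n, (X - C (b j))).natDegree < n := by
    have hdlt : (P - ∏ j : Fin n, (X - C (b j))).degree < P.degree := by
      apply degree_sub_lt
      · rw [degree_eq_natDegree hP.ne_zero, degree_eq_natDegree hprod.ne_zero, hd, hproddeg]
      · exact hP.ne_zero
      · rw [hP.leadingCoeff, hprod.leadingCoeff]
    have := natDegree_lt_natDegree hsub hdlt
    omega
  have := Polynomial.eq_zero_of_natDegree_lt_card_of_eval_eq_zero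
    (P - ∏ j : Fin n, (X - C (b j))) hb
    (fun j => by
      rw [eval_sub, hroot j, eval_prod]
      rw [Finset.prod_eq_zero (Finset.mem_univ j) (by simp)]
      ring)
    (by simpa using hdeglt.trans_le (by simp))
  exact hsub this

lemma exists_root_of_signs (P : Polynomial ℝ) {u v : ℝ} (huv : u < v) (p : ℕ)
    (hu : 0 < (-1:ℝ)^(p+1) * P.eval u) (hv : 0 < (-1:ℝ)^p * P.eval v) :
    ∃ x, x ∈ Set.Ioo u v ∧ P.eval x = 0 := by
  have hcont : ContinuousOn (fun x => P.eval x) (Set.Icc u v) :=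
    (Polynomial.continuous P).continuousOn
  rcases Nat.even_or_odd p with he | ho
  · rw [he.neg_one_pow, one_mul] at hv
    rw [pow_succ, he.neg_one_pow, one_mul] at hu
    have h0 : (0:ℝ) ∈ Set.Ioo (P.eval u) (P.eval v) := ⟨by nlinarith, hv⟩
    obtain ⟨x, hx, hfx⟩ := intermediate_value_Ioo huv.le hcont h0
    exact ⟨x, hx, hfx⟩
  · rw [ho.neg_one_pow, neg_one_mul, neg_pos] at hv
    rw [pow_succ, ho.neg_one_pow] at hu
    have hu' : 0 < P.eval u := by nlinarith
    have h0 : (0:ℝ) ∈ Set.Ioo (P.eval v) (P.eval u) := ⟨hv, hu'⟩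
    obtain ⟨x, hx, hfx⟩ := intermediate_value_Ioo' huv.le hcont h0
    exact ⟨x, hx, hfx⟩

lemma sign_unique {e : ℝ} {p q : ℕ} (hp : 0 < (-1:ℝ)^p * e) (hq : 0 < (-1:ℝ)^q * e) :
    p % 2 = q % 2 := by
  rcases Nat.even_or_odd p with hep | hop <;> rcases Nat.even_or_odd q with heq | hoq
  · obtain ⟨x, hx⟩ := hep; obtain ⟨y, hy⟩ := heq; omega
  · rw [hep.neg_one_pow, one_mul] at hp
    rw [hoq.neg_one_pow, neg_one_mul, neg_pos] at hq
    linarith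
  · rw [heq.neg_one_pow, one_mul] at hq
    rw [hop.neg_one_pow, neg_one_mul, neg_pos] at hp
    linarith
  · obtain ⟨x, hx⟩ := hop; obtain ⟨y, hy⟩ := hoq; omega

lemma U_invariant (c r : ℕ → ℝ) (hc0 : 0 < c 0) (hc : ∀ j, 1 ≤ j → 0 ≤ c j)
    (hr : ∀ k, 1 ≤ k → 0 < r k) :
    ∀ k, ∃ a : Fin (k+1) → ℝ, StrictMono a ∧
      U c r (k+1) = ∏ i : Fin (k+1), (X - C (a i)) ∧
      (∀ i : Fin (k+1), 0 < (-1:ℝ)^(k - (i:ℕ)) * (U c r k).eval (a i)) ∧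
      (∀ i : Fin (k+1), (a i < 0 ↔ (i:ℕ) < (k+1)/2)) ∧
      (∀ i : Fin (k+1), (0 < a i ↔ (k+1)/2 ≤ (i:ℕ))) := by
  intro k
  induction k with
  | zero =>
    refine ⟨fun _ => c 0, fun i j hij => absurd (Fin.lt_def.mp hij) (by omega), ?_, ?_, ?_, ?_⟩
    · show U c r 1 = _
      rw [Fin.prod_univ_one]; rfl
    · intro i; show (0:ℝ) < (-1)^(0 - (i:ℕ)) * (U c r 0).eval (c 0)
      have : (U c r 0).eval (c 0) = 1 := by simp [U]
      rw [this]
      simp [Nat.sub_eq_zero_of_le (Nat.le_of_lt_succ i.isLt)]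
    · intro i
      constructor
      · intro h; exfalso; linarith
      · intro h; exfalso; omega
    · intro i
      constructor
      · intro _; omega
      · intro _; exact hc0
  | succ k ih =>
    obtain ⟨a, hmono, hfact, hsgn, hneg, hpos⟩ := ih
    have hUdef : U c r (k+2) =
        (X + C ((-1)^(k+2) * c (k+1))) * U c r (k+1) - C (r (k+1)) * U c r k := rfl
    have haroot : ∀ i, (U c r (k+1)).eval (a i) = 0 := by
      intro i
      rw [hfact, eval_prod]
      exact Finset.prod_eq_zero (Finset.mem_univ i) (by simp)
    have hrk : 0 < r (k+1) := hr _ (by omega)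
    have hQa : ∀ i : Fin (k+1), 0 < (-1:ℝ)^(k+1-(i:ℕ)) * (U c r (k+2)).eval (a i) := by
      intro i
      have h2 : (U c r (k+2)).eval (a i) = -(r (k+1) * (U c r k).eval (a i)) := by
        rw [hUdef]; simp [haroot i]
      have h3 : k+1-(i:ℕ) = (k-(i:ℕ))+1 := by have := i.isLt; omega
      rw [h2, h3, pow_succ]
      have := hsgn i
      nlinarith
    have hUm := U_monic c r (k+2)
    have key : ∀ j : Fin (k+2), ∃ x, (U c r (k+2)).eval x = 0 ∧
        (∀ i : Fin (k+1), (i:ℕ) < (j:ℕ) → a i < x) ∧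
        (∀ i : Fin (k+1), (j:ℕ) ≤ (i:ℕ) → x < a i) := by
      intro j
      rcases Nat.eq_zero_or_pos (j:ℕ) with hj0 | hjpos
      · obtain ⟨z, hz1, hz2⟩ := monic_exists_sign_atBot _ hUm.1 (by rw [hUm.2]; omega) (a 0)
        rw [hUm.2] at hz2
        have hsa0 : 0 < (-1:ℝ)^(k+1) * (U c r (k+2)).eval (a 0) := by
          have := hQa 0
          simpa using this
        obtain ⟨x, hx, hxr⟩ := exists_root_of_signs _ hz1 (k+1) hz2 hsa0
        refine ⟨x, hxr, fun i h => absurd h (by omega), fun i _ => lt_of_lt_of_le hx.2 ?_⟩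
        exact hmono.monotone (by simp [Fin.le_def])
      · rcases eq_or_lt_of_le (Nat.lt_succ_iff.mp j.isLt) with hjtop | hjlt
        · obtain ⟨z, hz1, hz2⟩ := monic_exists_pos_atTop _ hUm.1 (by rw [hUm.2]; omega)
            (a (Fin.last k))
          have hsak : 0 < (-1:ℝ)^(0+1) * (U c r (k+2)).eval (a (Fin.last k)) := by
            have := hQa (Fin.last k)
            simpa using this
          obtain ⟨x, hx, hxr⟩ := exists_root_of_signs _ hz1 0 hsak (by simpa using hz2)
          refine ⟨x, hxr, fun i _ => lt_of_le_of_lt ?_ hx.1, fun i h => absurd h (by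
            have := i.isLt; omega)⟩
          exact hmono.monotone (by simp [Fin.le_def, Fin.last]; omega)
        · have hj1 : 1 ≤ (j:ℕ) := hjpos
          have hjk : (j:ℕ) ≤ k := by omega
          have hlt : a ⟨(j:ℕ)-1, by omega⟩ < a ⟨(j:ℕ), by omega⟩ :=
            hmono (Fin.mk_lt_mk.mpr (by omega))
          have hu := hQa ⟨(j:ℕ)-1, by omega⟩
          have hv := hQa ⟨(j:ℕ), by omega⟩
          have he : k+1-((j:ℕ)-1) = (k+1-(j:ℕ))+1 := by omega
          rw [show ((⟨(j:ℕ)-1, by omega⟩ : Fin (k+1)) : ℕ) = (j:ℕ)-1 from rfl, he] at hu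
          obtain ⟨x, hx, hxr⟩ := exists_root_of_signs _ hlt (k+1-(j:ℕ)) hu hv
          refine ⟨x, hxr, fun i h => lt_of_le_of_lt (hmono.monotone ?_) hx.1,
            fun i h => lt_of_lt_of_le hx.2 (hmono.monotone ?_)⟩
          · simp [Fin.le_def]; omega
          · simp [Fin.le_def]; omega
    choose b hbroot hblow hbhigh using key
    have hbmono : StrictMono b := by
      rw [Fin.strictMono_iff_lt_succ]
      intro i
      have h1 : b i.castSucc < a ⟨(i:ℕ), i.isLt⟩ :=
        hbhigh i.castSucc ⟨(i:ℕ), i.isLt⟩ (by simp)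
      have h2 : a ⟨(i:ℕ), i.isLt⟩ < b i.succ :=
        hblow i.succ ⟨(i:ℕ), i.isLt⟩ (by simp)
      linarith
    have hbfact : U c r (k+2) = ∏ j : Fin (k+2), (X - C (b j)) :=
      monic_eq_prod_of_roots _ hUm.1 hUm.2 b hbmono.injective hbroot
    have hnewsgn : ∀ j : Fin (k+2), 0 < (-1:ℝ)^(k+1 - (j:ℕ)) * (U c r (k+1)).eval (b j) := by
      intro j
      have hev : (U c r (k+1)).eval (b j) = ∏ i : Fin (k+1), (b j - a i) := by
        rw [hfact, eval_prod]; simp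
      have hne : ∀ i : Fin (k+1), b j - a i ≠ 0 := by
        intro i
        rcases lt_or_ge (i:ℕ) (j:ℕ) with h | h
        · have := hblow j i h; intro hcon; linarith
        · have := hbhigh j i h; intro hcon; linarith
      have hfilter : (Finset.univ.filter (fun i : Fin (k+1) => b j - a i < 0)) =
          (Finset.univ.filter (fun i : Fin (k+1) => (j:ℕ) ≤ (i:ℕ))) := by
        apply Finset.filter_congr
        intro i _
        constructor
        · intro h
          by_contra hcon
          have := hblow j i (by omega)
          linarith
        · intro h
          have := hbhigh j i h
          simp only [sub_neg]
          linarith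
      have hps := prod_sign Finset.univ (fun i : Fin (k+1) => b j - a i) (fun i _ => hne i)
      rw [hfilter, card_filter_le] at hps
      rw [hev]
      exact hps
    have hs0 := U_sign0 c r hc0 hc hr (k+2)
    have hne0 : (U c r (k+2)).eval 0 ≠ 0 := by
      intro h; rw [h, mul_zero] at hs0; exact lt_irrefl 0 hs0
    have hbne0 : ∀ j, b j ≠ 0 := by
      intro j h
      exact hne0 (h ▸ hbroot j)
    have hev0 : (U c r (k+2)).eval 0 = ∏ j : Fin (k+2), (0 - b j) := by
      rw [hbfact, eval_prod]; simp
    have hthresh : ∀ s : ℕ, (∀ j : Fin (k+2), (0 < b j ↔ s ≤ (j:ℕ))) →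
        0 < (-1:ℝ)^(k+2-s) * (U c r (k+2)).eval 0 := by
      intro s hs
      have hfilter : (Finset.univ.filter (fun j : Fin (k+2) => 0 - b j < 0)) =
          (Finset.univ.filter (fun j : Fin (k+2) => s ≤ (j:ℕ))) := by
        apply Finset.filter_congr
        intro j _
        rw [← hs j]
        constructor <;> intro h <;> linarith
      have hps := prod_sign Finset.univ (fun j : Fin (k+2) => 0 - b j)
        (fun j _ => sub_ne_zero.mpr (Ne.symm (hbne0 j)))
      rw [hfilter, card_filter_le] at hps
      rw [hev0]
      exact hps
    have htk : (k+1)/2 ≤ k+1 := by omega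
    have hA : ∀ j : Fin (k+2), (j:ℕ) < (k+1)/2 → b j < 0 := by
      intro j hj
      have h := hbhigh j ⟨(j:ℕ), by omega⟩ (le_refl _)
      have := (hneg ⟨(j:ℕ), by omega⟩).mpr (by simpa using hj)
      linarith
    have hB : ∀ j : Fin (k+2), (k+1)/2 < (j:ℕ) → 0 < b j := by
      intro j hj
      have h := hblow j ⟨(j:ℕ)-1, by have := j.isLt; omega⟩ (by show (j:ℕ)-1 < (j:ℕ); omega)
      have := (hpos ⟨(j:ℕ)-1, by have := j.isLt; omega⟩).mpr (by simp; omega)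
      linarith
    have hCfull : ∀ j : Fin (k+2), ((b j < 0 ↔ (j:ℕ) < (k+2)/2) ∧ (0 < b j ↔ (k+2)/2 ≤ (j:ℕ))) := by
      have hbt0 := hbne0 ⟨(k+1)/2, by omega⟩
      rcases Nat.even_or_odd k with ⟨m, hm⟩ | ⟨m, hm⟩
      · -- k = m + m : old threshold m, new threshold m+1
        subst hm
        have ht : (m+m+1)/2 = m := by omega
        have hbt : ∀ j : Fin (m+m+2), (j:ℕ) = m → b j < 0 := by
          have hbtm : b ⟨(m+m+1)/2, by omega⟩ < 0 := by
            by_contra hcon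
            have hbtpos : 0 < b ⟨(m+m+1)/2, by omega⟩ :=
              lt_of_le_of_ne (not_lt.mp hcon) (Ne.symm hbt0)
            have hs : ∀ j : Fin (m+m+2), (0 < b j ↔ (m+m+1)/2 ≤ (j:ℕ)) := by
              intro j
              constructor
              · intro h
                by_contra hcon2
                have := hA j (by omega)
                linarith
              · intro h
                rcases eq_or_lt_of_le h with h' | h'
                · have hj : j = ⟨(m+m+1)/2, by omega⟩ :=
                    Fin.ext (by show (j:ℕ) = (m+m+1)/2; omega)
                  rw [hj]; exact hbtpos
                · exact hB j h'
            have h1 := hthresh _ hs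
            have hpar := sign_unique h1 hs0
            omega
          intro j hjv
          have hj : j = ⟨(m+m+1)/2, by omega⟩ :=
            Fin.ext (by show (j:ℕ) = (m+m+1)/2; omega)
          rw [hj]; exact hbtm
        intro j
        have hnew : (m+m+2)/2 = m+1 := by omega
        rw [hnew]
        rcases lt_trichotomy ((j:ℕ)) m with h | h | h
        · have hbj := hA j (by omega)
          exact ⟨⟨fun _ => by omega, fun _ => hbj⟩,
            ⟨fun hp => by exfalso; linarith, fun hp => by exfalso; omega⟩⟩
        · have hbj := hbt j h
          exact ⟨⟨fun _ => by omega, fun _ => hbj⟩,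
            ⟨fun hp => by exfalso; linarith, fun hp => by exfalso; omega⟩⟩
        · have hbj := hB j (by omega)
          exact ⟨⟨fun hn => by exfalso; linarith, fun hn => by exfalso; omega⟩,
            ⟨fun _ => by omega, fun _ => hbj⟩⟩
      · -- k = 2m+1 : old threshold m+1, new threshold m+1
        subst hm
        have ht : (2*m+1+1)/2 = m+1 := by omega
        have hbt : ∀ j : Fin (2*m+1+2), (j:ℕ) = m+1 → 0 < b j := by
          have hbtm : 0 < b ⟨(2*m+1+1)/2, by omega⟩ := by
            by_contra hcon
            have hbtneg : b ⟨(2*m+1+1)/2, by omega⟩ < 0 :=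
              lt_of_le_of_ne (not_lt.mp hcon) hbt0
            have hs : ∀ j : Fin (2*m+1+2), (0 < b j ↔ (2*m+1+1)/2 + 1 ≤ (j:ℕ)) := by
              intro j
              constructor
              · intro h
                by_contra hcon2
                rcases Nat.lt_or_ge ((j:ℕ)) ((2*m+1+1)/2) with h2 | h2
                · have := hA j h2
                  linarith
                · have hj : j = ⟨(2*m+1+1)/2, by omega⟩ :=
                    Fin.ext (by show (j:ℕ) = (2*m+1+1)/2; omega)
                  rw [hj] at h
                  linarith
              · intro h
                exact hB j (by omega)
            have h1 := hthresh _ hs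
            have hpar := sign_unique h1 hs0
            omega
          intro j hjv
          have hj : j = ⟨(2*m+1+1)/2, by omega⟩ :=
            Fin.ext (by show (j:ℕ) = (2*m+1+1)/2; omega)
          rw [hj]; exact hbtm
        intro j
        have hnew : (2*m+1+2)/2 = m+1 := by omega
        rw [hnew]
        rcases lt_trichotomy ((j:ℕ)) (m+1) with h | h | h
        · have hbj := hA j (by omega)
          exact ⟨⟨fun _ => by omega, fun _ => hbj⟩,
            ⟨fun hp => by exfalso; linarith, fun hp => by exfalso; omega⟩⟩
        · have hbj := hbt j h
          exact ⟨⟨fun hn => by exfalso; linarith, fun hn => by exfalso; omega⟩,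
            ⟨fun _ => by omega, fun _ => hbj⟩⟩
        · have hbj := hB j (by omega)
          exact ⟨⟨fun hn => by exfalso; linarith, fun hn => by exfalso; omega⟩,
            ⟨fun _ => by omega, fun _ => hbj⟩⟩
    exact ⟨b, hbmono, hbfact, hnewsgn, fun j => (hCfull j).1, fun j => (hCfull j).2⟩

lemma count_lemma {n s : ℕ} (hs : s ≤ n) (a : Fin n → ℝ) (ha : StrictMono a)
    (P : Polynomial ℝ) (hP : P = ∏ i : Fin n, (X - C (a i)))
    (hneg : ∀ i, (a i < 0 ↔ (i:ℕ) < s)) (hpos : ∀ i, (0 < a i ↔ s ≤ (i:ℕ))) :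
    {x : ℝ | P.eval x = 0 ∧ x < 0}.ncard = s ∧
    {x : ℝ | P.eval x = 0 ∧ 0 < x}.ncard = n - s := by
  have hroot : ∀ x, P.eval x = 0 ↔ ∃ i, a i = x := by
    intro x
    rw [hP, eval_prod]
    simp only [eval_sub, eval_X, eval_C]
    rw [Finset.prod_eq_zero_iff]
    constructor
    · rintro ⟨i, _, hi⟩
      exact ⟨i, by linarith [sub_eq_zero.mp hi]⟩
    · rintro ⟨i, rfl⟩
      exact ⟨i, Finset.mem_univ i, by ring⟩
  have hsetneg : {x : ℝ | P.eval x = 0 ∧ x < 0} = a '' {i | (i:ℕ) < s} := by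
    ext x
    simp only [Set.mem_setOf_eq, Set.mem_image, hroot]
    constructor
    · rintro ⟨⟨i, rfl⟩, hx⟩
      exact ⟨i, (hneg i).mp hx, rfl⟩
    · rintro ⟨i, hi, rfl⟩
      exact ⟨⟨i, rfl⟩, (hneg i).mpr hi⟩
  have hsetpos : {x : ℝ | P.eval x = 0 ∧ 0 < x} = a '' {i | s ≤ (i:ℕ)} := by
    ext x
    simp only [Set.mem_setOf_eq, Set.mem_image, hroot]
    constructor
    · rintro ⟨⟨i, rfl⟩, hx⟩
      exact ⟨i, (hpos i).mp hx, rfl⟩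
    · rintro ⟨i, hi, rfl⟩
      exact ⟨⟨i, rfl⟩, (hpos i).mpr hi⟩
  constructor
  · rw [hsetneg, Set.ncard_image_of_injective _ ha.injective,
      Set.ncard_eq_toFinset_card']
    rw [Set.toFinset_setOf]
    exact card_filter_lt n s hs
  · rw [hsetpos, Set.ncard_image_of_injective _ ha.injective,
      Set.ncard_eq_toFinset_card']
    rw [Set.toFinset_setOf]
    exact card_filter_le n s

theorem stmt8 (c r : ℕ → ℝ) (hc0 : 0 < c 0) (hc : ∀ j, 1 ≤ j → 0 ≤ c j)
    (hr : ∀ k, 1 ≤ k → 0 < r k) (k : ℕ) (hk : Even k) :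
    {x : ℝ | (U c r k).eval x = 0 ∧ x < 0}.ncard = k / 2 ∧
    {x : ℝ | (U c r k).eval x = 0 ∧ 0 < x}.ncard = k / 2 ∧
    {x : ℝ | (U c r (k+1)).eval x = 0 ∧ x < 0}.ncard = k / 2 ∧
    {x : ℝ | (U c r (k+1)).eval x = 0 ∧ 0 < x}.ncard = k / 2 + 1 ∧
    (U c r k).eval 0 ≠ 0 ∧ (U c r (k+1)).eval 0 ≠ 0 := by
  obtain ⟨m, rfl⟩ := hk
  have hUkne : (U c r (m+m)).eval 0 ≠ 0 := by
    have := U_sign0 c r hc0 hc hr (m+m)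
    intro h; rw [h, mul_zero] at this; exact lt_irrefl 0 this
  have hUk1ne : (U c r (m+m+1)).eval 0 ≠ 0 := by
    have := U_sign0 c r hc0 hc hr (m+m+1)
    intro h; rw [h, mul_zero] at this; exact lt_irrefl 0 this
  have hdiv : (m+m)/2 = m := by omega
  -- counts for U (k+1)
  have hc1 : {x : ℝ | (U c r (m+m+1)).eval x = 0 ∧ x < 0}.ncard = m ∧
      {x : ℝ | (U c r (m+m+1)).eval x = 0 ∧ 0 < x}.ncard = m + 1 := by
    obtain ⟨a, hmono, hfact, _, hneg, hpos⟩ := U_invariant c r hc0 hc hr (m+m)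
    have hsval : (m+m+1)/2 = m := by omega
    rw [hsval] at hneg hpos
    have := count_lemma (n := m+m+1) (s := m) (by omega) a hmono _ hfact hneg hpos
    exact ⟨this.1, by rw [this.2]; omega⟩
  have hc0' : {x : ℝ | (U c r (m+m)).eval x = 0 ∧ x < 0}.ncard = m ∧
      {x : ℝ | (U c r (m+m)).eval x = 0 ∧ 0 < x}.ncard = m := by
    match m with
    | 0 =>
      constructor <;>
      · convert Set.ncard_empty ℝ
        ext x
        simp [U]
    | (n+1) =>
      obtain ⟨a, hmono, hfact, _, hneg, hpos⟩ := U_invariant c r hc0 hc hr (2*n+1)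
      have hsval : (2*n+1+1)/2 = n+1 := by omega
      rw [hsval] at hneg hpos
      have heq : (n+1)+(n+1) = (2*n+1)+1 := by omega
      rw [heq]
      have := count_lemma (n := 2*n+1+1) (s := n+1) (by omega) a hmono _ hfact hneg hpos
      exact ⟨this.1, by rw [this.2]; omega⟩
  rw [hdiv]
  exact ⟨hc0'.1, hc0'.2, hc1.1, hc1.2, hUkne, hUk1ne⟩
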